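/- Let g : ℝ → ℝ be convex with bounded nonempty sublevel sets, let λ, μ ∈ [0,∞), and let b⁻ ≤ b⁺ satisfy −λ ∈ ∂g(b⁻) and μ ∈ ∂g(b⁺). Define h(y) = min_{x∈ℝ} { g(x) + λ(x−y)₊ + μ(y−x)₊ }. Then h(y) = g(b⁻) + λ(b⁻ − y) if y < b⁻; h(y) = g(y) if b⁻ ≤ y ≤ b⁺; and h(y) = g(b⁺) + μ(y − b⁺) if y > b⁺. -/
import Mathlib


open Filter Topology Set

def subdiff (g : ℝ → ℝ) (x : ℝ) : Set ℝ :=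
  {d : ℝ | ∀ z : ℝ, g x + d * (z - x) ≤ g z}

lemma lemA (g : ℝ → ℝ) (hg : ConvexOn ℝ Set.univ g) (lam : ℝ) (hlam : 0 ≤ lam)
    (bm : ℝ) (hbm : ∀ z : ℝ, g bm + (-lam) * (z - bm) ≤ g z) :
    ∀ y x : ℝ, bm ≤ y → y ≤ x → g y ≤ g x + lam * (x - y) := by
  intro y x hby hyx
  rcases eq_or_lt_of_le hyx with rfl | hyx
  · simp
  rcases eq_or_lt_of_le hby with rfl | hby
  · have := hbm x; nlinarith
  · have hs := hg.slope_mono_adjacent (Set.mem_univ bm) (Set.mem_univ x) hby hyx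
    have h1 : -lam ≤ (g y - g bm) / (y - bm) := by
      rw [le_div_iff₀ (by linarith)]
      have := hbm y; nlinarith
    have h2 : -lam ≤ (g x - g y) / (x - y) := le_trans h1 hs
    rw [le_div_iff₀ (by linarith)] at h2
    nlinarith

lemma lemB (g : ℝ → ℝ) (hg : ConvexOn ℝ Set.univ g) (mu : ℝ) (hmu : 0 ≤ mu)
    (bp : ℝ) (hbp : ∀ z : ℝ, g bp + mu * (z - bp) ≤ g z) :
    ∀ y x : ℝ, x ≤ y → y ≤ bp → g y ≤ g x + mu * (y - x) := by
  intro y x hxy hyb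
  rcases eq_or_lt_of_le hxy with rfl | hxy
  · simp
  rcases eq_or_lt_of_le hyb with rfl | hyb
  · have := hbp x; nlinarith
  · have hs := hg.slope_mono_adjacent (Set.mem_univ x) (Set.mem_univ bp) hxy hyb
    have h1 : (g bp - g y) / (bp - y) ≤ mu := by
      rw [div_le_iff₀ (by linarith)]
      have := hbp y; nlinarith
    have h2 : (g y - g x) / (y - x) ≤ mu := le_trans hs h1
    rw [div_le_iff₀ (by linarith)] at h2
    nlinarith

theorem stmt_12 (g : ℝ → ℝ) (hg : ConvexOn ℝ Set.univ g)
    (hlev : ∃ α : ℝ, {x : ℝ | g x ≤ α}.Nonempty ∧ Bornology.IsBounded {x : ℝ | g x ≤ α})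
    (lam mu : ℝ) (hlam : 0 ≤ lam) (hmu : 0 ≤ mu)
    (bm bp : ℝ) (hb : bm ≤ bp) (hbm : -lam ∈ subdiff g bm) (hbp : mu ∈ subdiff g bp) :
    ∀ y : ℝ,
      (y < bm → IsLeast (Set.range fun x => g x + lam * max (x - y) 0 + mu * max (y - x) 0)
          (g bm + lam * (bm - y))) ∧
      (bm ≤ y → y ≤ bp →
        IsLeast (Set.range fun x => g x + lam * max (x - y) 0 + mu * max (y - x) 0) (g y)) ∧
      (bp < y → IsLeast (Set.range fun x => g x + lam * max (x - y) 0 + mu * max (y - x) 0)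
          (g bp + mu * (y - bp))) := by
  simp only [subdiff, Set.mem_setOf_eq] at hbm hbp
  intro y
  refine ⟨?_, ?_, ?_⟩
  · intro hy
    constructor
    · refine ⟨bm, ?_⟩
      show g bm + lam * max (bm - y) 0 + mu * max (y - bm) 0 = _
      rw [max_eq_left (by linarith), max_eq_right (by linarith)]
      ring
    · rintro _ ⟨x, rfl⟩
      beta_reduce
      have h1 := hbm x
      have h2 : lam * (x - y) ≤ lam * max (x - y) 0 :=
        mul_le_mul_of_nonneg_left (le_max_left _ _) hlam
      have h3 : 0 ≤ mu * max (y - x) 0 := mul_nonneg hmu (le_max_right _ _)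
      nlinarith
  · intro h1 h2
    constructor
    · exact ⟨y, by simp⟩
    · rintro _ ⟨x, rfl⟩
      beta_reduce
      rcases le_total x y with hxy | hxy
      · have := lemB g hg mu hmu bp hbp y x hxy h2
        have hm : mu * (y - x) ≤ mu * max (y - x) 0 :=
          mul_le_mul_of_nonneg_left (le_max_left _ _) hmu
        have h3 : 0 ≤ lam * max (x - y) 0 := mul_nonneg hlam (le_max_right _ _)
        linarith
      · have := lemA g hg lam hlam bm hbm y x h1 hxy
        have hm : lam * (x - y) ≤ lam * max (x - y) 0 :=
          mul_le_mul_of_nonneg_left (le_max_left _ _) hlam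
        have h3 : 0 ≤ mu * max (y - x) 0 := mul_nonneg hmu (le_max_right _ _)
        linarith
  · intro hy
    constructor
    · refine ⟨bp, ?_⟩
      show g bp + lam * max (bp - y) 0 + mu * max (y - bp) 0 = _
      rw [max_eq_right (by linarith), max_eq_left (by linarith)]
      ring
    · rintro _ ⟨x, rfl⟩
      beta_reduce
      have h1 := hbp x
      have h2 : mu * (y - x) ≤ mu * max (y - x) 0 :=
        mul_le_mul_of_nonneg_left (le_max_left _ _) hmu
      have h3 : 0 ≤ lam * max (x - y) 0 := mul_nonneg hlam (le_max_right _ _)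
      nlinarith
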